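/- Let Γ be a linearly ordered additive commutative group and let L be a field equipped with an additive valuation v : L → WithTop Γ (so v(ab) = v(a) + v(b), v(a+b) ≥ min(v(a),v(b)), v(0) = ⊤, v(1) = 0). Let k ≥ 1, let b₁,…,b_k ∈ L, and let γ ∈ Γ. Then γ ≤ v(bᵢ) for every i = 1,…,k if and only if j•γ ≤ v(e_j(b₁,…,b_k)) for every j = 1,…,k. -/

import Mathlib

/-- `j`-th elementary symmetric function of `b 0, …, b (k-1)`:
the sum of all products of `j` of them with distinct indices (`e₀ = 1`). -/
def esym {A : Type*} [CommSemiring A] {k : ℕ} (b : Fin k → A) (j : ℕ) : A :=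
  ∑ T ∈ Finset.powersetCard j Finset.univ, ∏ i ∈ T, b i

section Aux

variable {Γ : Type*} [AddCommGroup Γ] [LinearOrder Γ] [IsOrderedAddMonoid Γ] {L : Type*} [Field L]
    (v : L → WithTop Γ)
    (hv_mul : ∀ a b : L, v (a * b) = v a + v b)
    (hv_add : ∀ a b : L, min (v a) (v b) ≤ v (a + b))
    (hv_zero : v 0 = ⊤) (hv_one : v 1 = 0)

lemma coe_nsmul' (n : ℕ) (γ : Γ) : ((n • γ : Γ) : WithTop Γ) = n • (γ : WithTop Γ) := by
  induction n with
  | zero => simp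
  | succ m ih => rw [succ_nsmul, succ_nsmul, WithTop.coe_add, ih]

include hv_mul hv_one in
lemma vneg' (a : L) : v (-a) = v a := by
  have h1 : v (-1 : L) + v (-1 : L) = 0 := by
    rw [← hv_mul]; simpa using hv_one
  have h2 : v (-1 : L) = 0 := by
    cases h : v (-1 : L) with
    | top => rw [h] at h1; simp at h1
    | coe x =>
      rw [h] at h1
      have hx : x + x = 0 := by exact_mod_cast h1
      have hx0 : x = 0 := by
        rcases lt_trichotomy x 0 with hlt | h0 | hgt
        · have h2 := add_lt_add hlt hlt
          rw [add_zero] at h2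
          exact absurd hx h2.ne
        · exact h0
        · have h2 := add_lt_add hgt hgt
          rw [add_zero] at h2
          exact absurd hx h2.ne'
      rw [hx0]; rfl
  have : (-a) = (-1 : L) * a := by ring
  rw [this, hv_mul, h2, zero_add]

include hv_mul hv_one in
lemma vprod' {ι : Type*} (T : Finset ι) (g : ι → L) :
    v (∏ i ∈ T, g i) = ∑ i ∈ T, v (g i) := by
  classical
  induction T using Finset.induction with
  | empty => simpa using hv_one
  | insert _ _ hnot ih =>
    rw [Finset.prod_insert hnot, Finset.sum_insert hnot, hv_mul, ih]

include hv_add hv_zero in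
lemma vsum_le' {ι : Type*} (c : WithTop Γ) (F : Finset ι) (g : ι → L)
    (h : ∀ i ∈ F, c ≤ v (g i)) : c ≤ v (∑ i ∈ F, g i) := by
  classical
  induction F using Finset.induction with
  | empty => simp [hv_zero]
  | insert a s hnot ih =>
    rw [Finset.sum_insert hnot]
    refine le_trans (le_min (h a (Finset.mem_insert_self a s)) ?_) (hv_add _ _)
    exact ih fun i hi => h i (Finset.mem_insert_of_mem hi)

include hv_add hv_zero in
lemma vsum_lt' {ι : Type*} (c : WithTop Γ) (hc : c ≠ ⊤) (F : Finset ι) (g : ι → L)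
    (h : ∀ i ∈ F, c < v (g i)) : c < v (∑ i ∈ F, g i) := by
  classical
  induction F using Finset.induction with
  | empty => simpa [hv_zero] using hc.lt_top
  | insert a s hnot ih =>
    rw [Finset.sum_insert hnot]
    refine lt_of_lt_of_le (lt_min (h a (Finset.mem_insert_self a s)) ?_) (hv_add _ _)
    exact ih fun i hi => h i (Finset.mem_insert_of_mem hi)

/-- A nonempty sum of terms each strictly below `γ` is strictly below `card • γ`. -/
lemma sum_lt_card_nsmul' {ι : Type*} (F : Finset ι) (hF : F.Nonempty)
    (g : ι → WithTop Γ) (γ : Γ) (h : ∀ i ∈ F, g i < (γ : WithTop Γ)) :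
    ∑ i ∈ F, g i < F.card • (γ : WithTop Γ) := by
  classical
  obtain ⟨i0, hi0⟩ := hF
  have hpos : 0 < F.card := Finset.card_pos.mpr ⟨i0, hi0⟩
  have hcard : F.card = (F.erase i0).card + 1 := by
    rw [Finset.card_erase_of_mem hi0]
    omega
  have hrest : ∑ i ∈ F.erase i0, g i ≤ (F.erase i0).card • (γ : WithTop Γ) :=
    Finset.sum_le_card_nsmul _ _ _ fun i hi => (h i (Finset.mem_of_mem_erase hi)).le
  have hne : (F.erase i0).card • (γ : WithTop Γ) ≠ ⊤ := by
    rw [← coe_nsmul']; exact WithTop.coe_ne_top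
  calc ∑ i ∈ F, g i = g i0 + ∑ i ∈ F.erase i0, g i := (Finset.add_sum_erase F g hi0).symm
    _ ≤ g i0 + (F.erase i0).card • (γ : WithTop Γ) := add_le_add_right hrest _
    _ < (γ : WithTop Γ) + (F.erase i0).card • (γ : WithTop Γ) :=
        WithTop.add_lt_add_right hne (h i0 hi0)
    _ = F.card • (γ : WithTop Γ) := by rw [hcard, succ_nsmul, add_comm]

end Aux

/-- For an additive valuation `v` on a field `L`, all of `b₁, …, b_k` have
valuation at least `γ` iff `e_j(b₁,…,b_k)` has valuation at least `j•γ` for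
every `j = 1, …, k`. -/
theorem valuation_esymm_iff
    {Γ : Type*} [AddCommGroup Γ] [LinearOrder Γ] [IsOrderedAddMonoid Γ] {L : Type*} [Field L]
    (v : L → WithTop Γ)
    (hv_mul : ∀ a b : L, v (a * b) = v a + v b)
    (hv_add : ∀ a b : L, min (v a) (v b) ≤ v (a + b))
    (hv_zero : v 0 = ⊤) (hv_one : v 1 = 0)
    (k : ℕ) (hk : 1 ≤ k) (b : Fin k → L) (γ : Γ) :
    (∀ i, (γ : WithTop Γ) ≤ v (b i)) ↔
      (∀ j, 1 ≤ j → j ≤ k → ((j • γ : Γ) : WithTop Γ) ≤ v (esym b j)) := by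
  classical
  constructor
  · intro h j hj1 hjk
    rw [esym, coe_nsmul']
    apply vsum_le' v hv_add hv_zero
    intro T hT
    rw [vprod' v hv_mul hv_one]
    have hcard : T.card = j := (Finset.mem_powersetCard.mp hT).2
    rw [← hcard]
    exact Finset.card_nsmul_le_sum T _ _ fun i _ => h i
  · intro h
    by_contra hc
    push_neg at hc
    obtain ⟨i0, hi0⟩ : ∃ i, v (b i) < (γ : WithTop Γ) := by
      obtain ⟨i, hi⟩ := hc; exact ⟨i, hi⟩
    set S : Finset (Fin k) := Finset.univ.filter (fun i => v (b i) < (γ : WithTop Γ)) with hS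
    have hSmem : ∀ i, i ∈ S ↔ v (b i) < (γ : WithTop Γ) := by
      intro i; simp [hS]
    have hSne : S.Nonempty := ⟨i0, (hSmem i0).mpr hi0⟩
    set j := S.card with hj
    have hj1 : 1 ≤ j := Finset.card_pos.mpr hSne
    have hjk : j ≤ k := by
      have := Finset.card_le_card (Finset.subset_univ S)
      simpa using this
    -- the valuation of the sum of `b` over `S` is strictly less than `j • γ`
    have hkey1 : ∑ i ∈ S, v (b i) < ((j • γ : Γ) : WithTop Γ) := by
      rw [coe_nsmul']
      exact sum_lt_card_nsmul' S hSne _ γ fun i hi => (hSmem i).mp hi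
    have hSsum_ne_top : (∑ i ∈ S, v (b i)) ≠ ⊤ :=
      ne_top_of_le_ne_top WithTop.coe_ne_top hkey1.le
    -- any other `T` of the same cardinality has strictly bigger sum
    have hkey2 : ∀ T ∈ Finset.powersetCard j Finset.univ, T ≠ S →
        ∑ i ∈ S, v (b i) < ∑ i ∈ T, v (b i) := by
      intro T hT hTS
      have hTcard : T.card = j := (Finset.mem_powersetCard.mp hT).2
      have hST_ne : (S \ T).Nonempty := by
        rw [Finset.sdiff_nonempty]
        intro hsub
        exact hTS (Finset.eq_of_subset_of_card_le hsub (by omega)).symm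
      have hcards : (S \ T).card = (T \ S).card := by
        have h1 := Finset.card_sdiff_add_card_inter S T
        have h2 := Finset.card_sdiff_add_card_inter T S
        rw [Finset.inter_comm] at h2
        omega
      have hsplitS : ∑ i ∈ S, v (b i) = ∑ i ∈ S \ T, v (b i) + ∑ i ∈ S ∩ T, v (b i) := by
        rw [← Finset.sum_sdiff (Finset.inter_subset_left (s₂ := T)),
          Finset.sdiff_inter_self_left]
      have hsplitT : ∑ i ∈ T, v (b i) = ∑ i ∈ T \ S, v (b i) + ∑ i ∈ S ∩ T, v (b i) := by
        rw [← Finset.sum_sdiff (Finset.inter_subset_left (s₂ := S)),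
          Finset.sdiff_inter_self_left, Finset.inter_comm]
      have hinter_ne_top : (∑ i ∈ S ∩ T, v (b i)) ≠ ⊤ := by
        have hle : ∑ i ∈ S ∩ T, v (b i) ≤ (S ∩ T).card • (γ : WithTop Γ) :=
          Finset.sum_le_card_nsmul _ _ _ fun i hi =>
            ((hSmem i).mp (Finset.mem_inter.mp hi).1).le
        refine ne_top_of_le_ne_top ?_ hle
        rw [← coe_nsmul']; exact WithTop.coe_ne_top
      have hlt : ∑ i ∈ S \ T, v (b i) < (S \ T).card • (γ : WithTop Γ) :=
        sum_lt_card_nsmul' _ hST_ne _ γ fun i hi =>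
          (hSmem i).mp (Finset.mem_sdiff.mp hi).1
      have hge : (T \ S).card • (γ : WithTop Γ) ≤ ∑ i ∈ T \ S, v (b i) :=
        Finset.card_nsmul_le_sum _ _ _ fun i hi =>
          le_of_not_gt fun hlt' => (Finset.mem_sdiff.mp hi).2 ((hSmem i).mpr hlt')
      rw [hsplitS, hsplitT]
      refine lt_of_lt_of_le
        (WithTop.add_lt_add_right hinter_ne_top (hcards ▸ hlt : _)) ?_
      exact add_le_add_left hge _
    -- split off the term `T = S` from `esym b j`
    have hSpow : S ∈ Finset.powersetCard j Finset.univ :=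
      Finset.mem_powersetCard.mpr ⟨Finset.subset_univ S, rfl⟩
    set R : L := ∑ T ∈ (Finset.powersetCard j Finset.univ).erase S, ∏ i ∈ T, b i with hR
    have hsplit : esym b j = (∏ i ∈ S, b i) + R := by
      rw [esym]; exact (Finset.add_sum_erase _ (fun T => ∏ i ∈ T, b i) hSpow).symm
    have hvR : ∑ i ∈ S, v (b i) < v R := by
      rw [hR]
      apply vsum_lt' v hv_add hv_zero _ hSsum_ne_top
      intro T hT
      rw [vprod' v hv_mul hv_one]
      exact hkey2 T (Finset.mem_of_mem_erase hT) (Finset.ne_of_mem_erase hT)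
    have hvProd : v (∏ i ∈ S, b i) = ∑ i ∈ S, v (b i) := vprod' v hv_mul hv_one _ _
    -- deduce `v (esym b j) ≤ ∑ i ∈ S, v (b i)`
    have hle : v (esym b j) ≤ ∑ i ∈ S, v (b i) := by
      by_contra hgt
      push_neg at hgt
      have heq : (∏ i ∈ S, b i) = esym b j + (-R) := by rw [hsplit]; ring
      have hmin : min (v (esym b j)) (v (-R)) ≤ v (∏ i ∈ S, b i) := heq ▸ hv_add _ _
      rw [vneg' v hv_mul hv_one, hvProd] at hmin
      exact absurd hmin (not_le.mpr (lt_min hgt hvR))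
    exact absurd (h j hj1 hjk) (not_le.mpr (lt_of_le_of_lt hle hkey1))
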